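/- arXiv:1907.12758 — 3 statements merged into one kernel-verified Lean document; each statement's English description precedes it below -/
import Mathlib

section
/- (Sliding-to-midpoint lemma) Let P be a finite set of points in ℝ², and for each p ∈ P let ℓ_p > 0 and a_p ∈ [0, ℓ_p] specify an anchoring offset, so that at rotation angle θ the segment at p is S_p(θ) = {p + (t − a_p)·u_θ : t ∈ [0, ℓ_p]} with u_θ = (−sin θ, cos θ). Suppose that for all θ and all distinct p, q ∈ P, S_p(θ) ∩ S_q(θ) = ∅. Then the midpoint-anchored segments M_p(θ) = {p + t·u_θ : t ∈ [−ℓ_p/2, ℓ_p/2]} also satisfy: for all θ and all distinct p, q, M_p(θ) ∩ M_q(θ) = ∅. -/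
open Real Set Metric

/-- The rotated vertical unit direction `(-sin θ, cos θ)`. -/
noncomputable def uDir (θ : ℝ) : EuclideanSpace ℝ (Fin 2) := WithLp.toLp 2 ![-Real.sin θ, Real.cos θ]

/-- Sliding-model segment: length `ℓ`, anchored at offset `a ∈ [0, ℓ]` from its lower end,
rotated by angle `θ`. -/
noncomputable def slideSeg (p : EuclideanSpace ℝ (Fin 2)) (ℓ a θ : ℝ) :
    Set (EuclideanSpace ℝ (Fin 2)) :=
  (fun t : ℝ => p + (t - a) • uDir θ) '' Set.Icc 0 ℓ

/-- Segment of length `ℓ` anchored at its midpoint `p`, rotated by angle `θ`. -/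
noncomputable def midseg (p : EuclideanSpace ℝ (Fin 2)) (ℓ θ : ℝ) :
    Set (EuclideanSpace ℝ (Fin 2)) :=
  (fun t : ℝ => p + t • uDir θ) '' Set.Icc (-(ℓ / 2)) (ℓ / 2)

lemma uDir_pi (θ : ℝ) : uDir (θ + π) = -uDir θ := by
  unfold uDir
  ext i
  fin_cases i <;>
    simp [Real.sin_add, Real.cos_add]

lemma slide_inter (p q : EuclideanSpace ℝ (Fin 2)) (lp lq ap aq θ c : ℝ)
    (hq : q = p + c • uDir θ)
    (hl : -lq ≤ c + ap - aq) (hr : c + ap - aq ≤ lp)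
    (hlp : 0 ≤ lp) (hlq : 0 ≤ lq) :
    ¬ Disjoint (slideSeg p lp ap θ) (slideSeg q lq aq θ) := by
  rw [Set.not_disjoint_iff]
  set e := c + ap - aq with he
  have hmax : max e 0 - max (-e) 0 = e := by
    rcases le_total e 0 with h0 | h0
    · rw [max_eq_right h0, max_eq_left (by linarith : (0:ℝ) ≤ -e)]; ring
    · rw [max_eq_left h0, max_eq_right (by linarith : -e ≤ (0:ℝ))]; ring
  refine ⟨p + (max e 0 - ap) • uDir θ,
    ⟨max e 0, ⟨le_max_right _ _, max_le hr hlp⟩, rfl⟩,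
    ⟨max (-e) 0, ⟨le_max_right _ _, max_le (by linarith) hlq⟩, ?_⟩⟩
  simp only
  rw [hq, add_assoc, ← add_smul]
  have hsc : c + (-e ⊔ 0 - aq) = e ⊔ 0 - ap := by linarith
  rw [hsc]

/-- If a sliding-model labeling is proper (no two segments ever intersect during rotation),
then re-anchoring every segment at its midpoint yields a proper labeling as well. -/
theorem stmt5 (P : Finset (EuclideanSpace ℝ (Fin 2)))
    (ℓ a : EuclideanSpace ℝ (Fin 2) → ℝ)
    (hℓ : ∀ p ∈ P, 0 < ℓ p)
    (ha : ∀ p ∈ P, a p ∈ Set.Icc 0 (ℓ p))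
    (h : ∀ θ : ℝ, ∀ p ∈ P, ∀ q ∈ P, p ≠ q →
      Disjoint (slideSeg p (ℓ p) (a p) θ) (slideSeg q (ℓ q) (a q) θ)) :
    ∀ θ : ℝ, ∀ p ∈ P, ∀ q ∈ P, p ≠ q →
      Disjoint (midseg p (ℓ p) θ) (midseg q (ℓ q) θ) := by
  intro θ p hp q hq hpq
  rw [Set.disjoint_left]
  rintro x ⟨t, ⟨ht1, ht2⟩, rfl⟩ ⟨s, ⟨hs1, hs2⟩, hx⟩
  simp only at hx
  obtain ⟨hap0, hapl⟩ := ha p hp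
  obtain ⟨haq0, haql⟩ := ha q hq
  have hlp := (hℓ p hp).le
  have hlq := (hℓ q hq).le
  -- hx : q + s • uDir θ = p + t • uDir θ
  have hq' : q = p + (t - s) • uDir θ := by
    have h1 : q = p + t • uDir θ - s • uDir θ := by rw [← hx]; abel
    rw [h1, sub_smul]; abel
  set c := t - s with hc
  have hq'' : q = p + (-c) • uDir (θ + π) := by
    rw [uDir_pi, smul_neg, neg_smul, neg_neg]; exact hq'
  rcases le_or_gt (c + a p - a q) (ℓ p) with h1 | h1
  · rcases le_or_gt (-(ℓ q)) (c + a p - a q) with h2 | h2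
    · exact slide_inter p q (ℓ p) (ℓ q) (a p) (a q) θ c hq' h2 h1 hlp hlq
        (h θ p hp q hq hpq)
    · -- c + a p - a q < -ℓ q : use θ + π with -c
      refine slide_inter p q (ℓ p) (ℓ q) (a p) (a q) (θ + π) (-c) hq''
        (by linarith) (by linarith) hlp hlq (h (θ + π) p hp q hq hpq)
  · -- c + a p - a q > ℓ p : use θ + π with -c
    refine slide_inter p q (ℓ p) (ℓ q) (a p) (a q) (θ + π) (-c) hq''
      (by linarith) (by linarith) hlp hlq (h (θ + π) p hp q hq hpq)
end

section
/- Let p, q ∈ ℝ² be distinct, ℓ_p, ℓ_q > 0, and a_p ∈ [0, ℓ_p], a_q ∈ [0, ℓ_q] be anchoring offsets. If for all θ the segments S_p(θ) = {p + (t − a_p)·u_θ : t ∈ [0, ℓ_p]} and S_q(θ) = {q + (t − a_q)·u_θ : t ∈ [0, ℓ_q]} are disjoint, then ‖p − q‖ > (ℓ_p + ℓ_q)/2. -/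
open Real Set Metric

lemma aux6 (p q : EuclideanSpace ℝ (Fin 2)) (ℓp ℓq ap aq d θ : ℝ)
    (hd : 0 < d) (hq : q = p + d • uDir θ)
    (hℓp : 0 < ℓp) (hℓq : 0 < ℓq)
    (hap : ap ∈ Set.Icc 0 ℓp) (haq : aq ∈ Set.Icc 0 ℓq)
    (hdis : Disjoint (slideSeg p ℓp ap θ) (slideSeg q ℓq aq θ)) :
    ℓp - ap + aq < d := by
  by_contra hcon
  push_neg at hcon
  obtain ⟨hap0, hap1⟩ := hap
  obtain ⟨haq0, haq1⟩ := haq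
  set x := max (-ap) (d - aq) with hx
  have hx1 : x ≤ ℓp - ap := by
    apply max_le <;> nlinarith
  have hz1 : p + x • uDir θ ∈ slideSeg p ℓp ap θ := by
    refine ⟨x + ap, ⟨?_, ?_⟩, ?_⟩
    · have := le_max_left (-ap) (d - aq); linarith
    · linarith
    · ring_nf
  have hz2 : p + x • uDir θ ∈ slideSeg q ℓq aq θ := by
    refine ⟨x - d + aq, ⟨?_, ?_⟩, ?_⟩
    · have := le_max_right (-ap) (d - aq); linarith
    · have h1 : -ap ≤ d + ℓq - aq := by nlinarith
      have h2 : d - aq ≤ d + ℓq - aq := by linarith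
      have := max_le h1 h2
      simp only [← hx] at this; linarith
    · rw [hq]
      show p + d • uDir θ + (x - d + aq - aq) • uDir θ = _
      rw [show x - d + aq - aq = x - d by ring, sub_smul]
      abel
  exact absurd (Set.not_disjoint_iff.mpr ⟨_, hz1, hz2⟩) (by simpa using hdis)

theorem stmt6 (p q : EuclideanSpace ℝ (Fin 2)) (ℓp ℓq ap aq : ℝ)
    (hne : p ≠ q) (hℓp : 0 < ℓp) (hℓq : 0 < ℓq)
    (hap : ap ∈ Set.Icc 0 ℓp) (haq : aq ∈ Set.Icc 0 ℓq)
    (h : ∀ θ : ℝ, Disjoint (slideSeg p ℓp ap θ) (slideSeg q ℓq aq θ)) :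
    dist p q > (ℓp + ℓq) / 2 := by
  set d := dist p q with hdd
  have hd : 0 < d := dist_pos.mpr hne
  set u : EuclideanSpace ℝ (Fin 2) := d⁻¹ • (q - p) with hu
  have hnu : ‖u‖ = 1 := by
    rw [hu, norm_smul, norm_inv, Real.norm_eq_abs, abs_of_pos hd,
      show ‖q - p‖ = d by rw [hdd, dist_eq_norm, ← norm_neg]; congr 1; abel]
    field_simp
  have hsq : (u 0) ^ 2 + (u 1) ^ 2 = 1 := by
    have := EuclideanSpace.norm_eq u
    rw [hnu] at this
    have h2 : Real.sqrt (∑ i : Fin 2, ‖u i‖ ^ 2) = 1 := this.symm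
    rw [Fin.sum_univ_two] at h2
    have := Real.sqrt_eq_one.mp h2
    simpa [Real.norm_eq_abs, sq_abs] using this
  set z : ℂ := ⟨u 1, -(u 0)⟩ with hz
  have hzabs : ‖z‖ = 1 := by
    rw [Complex.norm_def, Complex.normSq_mk]
    rw [show u 1 * u 1 + -u 0 * -u 0 = (u 0)^2 + (u 1)^2 by ring, hsq, Real.sqrt_one]
  have hz0 : z ≠ 0 := by
    intro h0; rw [h0] at hzabs; simp at hzabs
  set θ := Complex.arg z with hθ
  have hcos : Real.cos θ = u 1 := by
    rw [hθ, Complex.cos_arg hz0, hzabs]; simp [hz]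
  have hsin : Real.sin θ = -(u 0) := by
    rw [hθ, Complex.sin_arg, hzabs]; simp [hz]
  have huθ : uDir θ = u := by
    ext i
    fin_cases i <;> simp [uDir, hcos, hsin]
  have hqp : q = p + d • uDir θ := by
    rw [huθ, hu, smul_smul, mul_inv_cancel₀ hd.ne', one_smul]
    abel
  have huθ' : uDir (θ + Real.pi) = -uDir θ := by
    ext i
    fin_cases i <;> simp [uDir, Real.sin_add, Real.cos_add]
  have hpq : p = q + d • uDir (θ + Real.pi) := by
    rw [huθ', smul_neg, hqp]; abel
  have h1 := aux6 p q ℓp ℓq ap aq d θ hd hqp hℓp hℓq hap haq (h θ)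
  have h2 := aux6 q p ℓq ℓp aq ap d (θ + Real.pi) hd hpq hℓq hℓp haq hap
    (h (θ + Real.pi)).symm
  linarith
end

section
/- Let D be a finite set of unit disks in ℝ² with centers P, and assign to each center p ∈ P a vertical segment of length 2 anchored at its bottom endpoint (1P model). Then a subset P' ⊆ P admits a proper rotating labeling (no two segments ever intersect under simultaneous rotation) if and only if the unit disks centered at the points of P' are pairwise interior-disjoint. In particular, the maximum size of a proper labeling equals the maximum size of a pairwise-disjoint subset of D. -/
open Real Set Metric

/-- Segment of length `ℓ` anchored at its bottom endpoint `p`, rotated by angle `θ`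
(half-open convention for the top endpoint). -/
noncomputable def seg (p : EuclideanSpace ℝ (Fin 2)) (ℓ θ : ℝ) : Set (EuclideanSpace ℝ (Fin 2)) :=
  (fun t : ℝ => p + t • uDir θ) '' Set.Ico 0 ℓ

lemma norm_uDir (θ : ℝ) : ‖uDir θ‖ = 1 := by
  rw [EuclideanSpace.norm_eq]
  have h : ∑ i : Fin 2, ‖uDir θ i‖ ^ 2 = 1 := by
    simp [uDir, Fin.sum_univ_two, sq_abs]
  rw [h, Real.sqrt_one]

lemma exists_uDir (v : EuclideanSpace ℝ (Fin 2)) (hv : ‖v‖ = 1) : ∃ θ, uDir θ = v := by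
  have hsum : v 0 ^ 2 + v 1 ^ 2 = 1 := by
    rw [EuclideanSpace.norm_eq, Fin.sum_univ_two] at hv
    have hnn : (0:ℝ) ≤ ‖v 0‖ ^ 2 + ‖v 1‖ ^ 2 := by positivity
    have h1 : ‖v 0‖ ^ 2 + ‖v 1‖ ^ 2 = 1 := by
      rw [← Real.sq_sqrt hnn, hv]; norm_num
    simpa [sq_abs] using h1
  have hb1 : |v 1| ≤ 1 := abs_le_one_iff_mul_self_le_one.2 (by nlinarith)
  have hb1' : -1 ≤ v 1 := (abs_le.1 hb1).1
  have hb1'' : v 1 ≤ 1 := (abs_le.1 hb1).2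
  have hsq : Real.sqrt (1 - v 1 ^ 2) = |v 0| := by
    rw [show 1 - v 1 ^ 2 = v 0 ^ 2 by linarith]
    exact Real.sqrt_sq_eq_abs _
  rcases le_or_gt (v 0) 0 with h0 | h0
  · refine ⟨Real.arccos (v 1), ?_⟩
    have hs : Real.sin (Real.arccos (v 1)) = -v 0 := by
      rw [Real.sin_arccos, hsq, abs_of_nonpos h0]
    have hc : Real.cos (Real.arccos (v 1)) = v 1 := Real.cos_arccos hb1' hb1''
    ext i; fin_cases i <;> simp [uDir, hs, hc]
  · refine ⟨-Real.arccos (v 1), ?_⟩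
    have hs : Real.sin (-Real.arccos (v 1)) = -v 0 := by
      rw [Real.sin_neg, Real.sin_arccos, hsq, abs_of_pos h0]
    have hc : Real.cos (-Real.arccos (v 1)) = v 1 := by
      rw [Real.cos_neg]; exact Real.cos_arccos hb1' hb1''
    ext i; fin_cases i <;> simp [uDir, hs, hc]

lemma seg_disjoint_of_dist {p q : EuclideanSpace ℝ (Fin 2)} (h : 2 ≤ dist p q) (θ : ℝ) :
    Disjoint (seg p 2 θ) (seg q 2 θ) := by
  rw [Set.disjoint_left]
  rintro x ⟨s, ⟨hs0, hs2⟩, rfl⟩ ⟨t, ⟨ht0, ht2⟩, hx⟩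
  have hpq : p - q = (t - s) • uDir θ := by
    have h2 : p - q = t • uDir θ - s • uDir θ :=
      sub_eq_sub_iff_add_eq_add.mpr (hx.symm.trans (add_comm _ _))
    rw [h2, sub_smul]
  have hd : dist p q = |t - s| := by
    rw [dist_eq_norm, hpq, norm_smul, norm_uDir, Real.norm_eq_abs, mul_one]
  have hlt : |t - s| < 2 := abs_sub_lt_of_nonneg_of_lt ht0 ht2 hs0 hs2
  linarith

lemma dist_of_seg_disjoint {p q : EuclideanSpace ℝ (Fin 2)} (hne : p ≠ q)
    (h : ∀ θ, Disjoint (seg p 2 θ) (seg q 2 θ)) : 2 ≤ dist p q := by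
  by_contra hlt
  push_neg at hlt
  set c := dist p q with hc
  have hc0 : 0 < c := dist_pos.2 hne
  have hnorm : ‖c⁻¹ • (q - p)‖ = 1 := by
    rw [norm_smul, Real.norm_eq_abs, abs_of_pos (inv_pos.2 hc0), ← dist_eq_norm,
      dist_comm q p, ← hc]
    field_simp
  obtain ⟨θ, hθ⟩ := exists_uDir _ hnorm
  have hq1 : q ∈ seg p 2 θ := by
    refine ⟨c, ⟨le_of_lt hc0, hlt⟩, ?_⟩
    rw [hθ]
    show p + c • c⁻¹ • (q - p) = q
    rw [smul_smul, mul_inv_cancel₀ (ne_of_gt hc0), one_smul]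
    abel
  have hq2 : q ∈ seg q 2 θ := ⟨0, ⟨le_rfl, by norm_num⟩, by simp⟩
  exact (Set.disjoint_left.1 (h θ) hq1) hq2

/-- Reduction between GMIS for unit disks and MRIS for segments of length 2 in the 1P model:
a subset `P'` of the centres admits a proper rotating labeling if and only if the unit disks
centred at the points of `P'` are pairwise interior-disjoint. -/
theorem stmt11 (P P' : Finset (EuclideanSpace ℝ (Fin 2))) (hsub : P' ⊆ P) :
    (∀ θ : ℝ, ∀ p ∈ P', ∀ q ∈ P', p ≠ q → Disjoint (seg p 2 θ) (seg q 2 θ)) ↔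
    (∀ p ∈ P', ∀ q ∈ P', p ≠ q →
      Disjoint (Metric.ball p 1) (Metric.ball q 1)) := by
  constructor
  · intro h p hp q hq hne
    have hd : 2 ≤ dist p q := dist_of_seg_disjoint hne (fun θ => h θ p hp q hq hne)
    exact Metric.ball_disjoint_ball (by linarith)
  · intro h θ p hp q hq hne
    have hd : 2 ≤ dist p q := by
      by_contra hlt
      push_neg at hlt
      have hm : midpoint ℝ p q ∈ Metric.ball p 1 ∩ Metric.ball q 1 := by
        constructor
        · rw [Metric.mem_ball, dist_midpoint_left]
          rw [Real.norm_ofNat]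
          linarith
        · rw [Metric.mem_ball, midpoint_comm, dist_midpoint_left]
          rw [Real.norm_ofNat, dist_comm]
          linarith
      exact Set.disjoint_left.1 (h p hp q hq hne) hm.1 hm.2
    exact seg_disjoint_of_dist hd θ
end
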